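/- If Y is a closed sublattice of ℓ∞ which is an order ideal (x ∈ Y whenever |x| ≤ |y| for some y ∈ Y), then Y = c_{0,I} where I = {A ⊆ ℕ : χ_A ∈ Y} (I is a collection of subsets closed under subsets and finite unions, not necessarily containing all finite sets). -/

import Mathlib

open BoundedContinuousFunction

/-- The characteristic function of `A ⊆ ℕ` as an element of `ℓ∞`. -/
noncomputable def chi (A : Set ℕ) : ℕ →ᵇ ℝ :=
  BoundedContinuousFunction.ofNormedAddCommGroup (A.indicator fun _ => (1 : ℝ))
    continuous_of_discreteTopology 1 (by
      intro n
      by_cases h : n ∈ A <;> simp [Set.indicator, h])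

lemma chi_apply (A : Set ℕ) (n : ℕ) : chi A n = A.indicator (fun _ => (1:ℝ)) n := rfl

/-- If `Y` is a closed sublattice of `ℓ∞` which is an order ideal, then `Y = c_{0,I}`
where `I = {A ⊆ ℕ : χ_A ∈ Y}`. -/
theorem closed_ideal_eq_c0I (Y : Set (ℕ →ᵇ ℝ))
    (hclosed : IsClosed Y)
    (hzero : (0 : ℕ →ᵇ ℝ) ∈ Y)
    (hadd : ∀ x ∈ Y, ∀ y ∈ Y, x + y ∈ Y)
    (hsmul : ∀ (c : ℝ), ∀ x ∈ Y, c • x ∈ Y)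
    (hsup : ∀ x ∈ Y, ∀ y ∈ Y, x ⊔ y ∈ Y)
    (hinf : ∀ x ∈ Y, ∀ y ∈ Y, x ⊓ y ∈ Y)
    (hsolid : ∀ x : ℕ →ᵇ ℝ, ∀ y ∈ Y, (∀ n, |x n| ≤ |y n|) → x ∈ Y) :
    Y = {x : ℕ →ᵇ ℝ | ∀ ε > (0 : ℝ), {n | ε ≤ |x n|} ∈ {A : Set ℕ | chi A ∈ Y}} := by
  ext x
  constructor
  · intro hx ε hε
    refine hsolid _ _ (hsmul ε⁻¹ x hx) ?_
    intro n
    rw [chi_apply]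
    by_cases h : n ∈ {n | ε ≤ |x n|}
    · simp only [Set.indicator_of_mem h]
      have : ε ≤ |x n| := h
      simp only [BoundedContinuousFunction.coe_smul, Pi.smul_apply, smul_eq_mul, abs_mul,
        abs_inv, abs_of_pos hε]
      rw [abs_one, ← div_eq_inv_mul, le_div_iff₀ hε, one_mul]
      linarith
    · simp [Set.indicator_of_notMem h]
      positivity
  · intro hx
    rw [← hclosed.closure_eq]
    rw [Metric.mem_closure_iff]
    intro ε hε
    set A : Set ℕ := {n | ε/2 ≤ |x n|} with hA
    have hchi : chi A ∈ Y := hx (ε/2) (by linarith)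
    set z : ℕ →ᵇ ℝ := x * chi A with hz
    have hzY : z ∈ Y := by
      refine hsolid z _ (hsmul ‖x‖ _ hchi) ?_
      intro n
      simp only [hz, BoundedContinuousFunction.coe_mul, Pi.mul_apply,
        BoundedContinuousFunction.coe_smul, Pi.smul_apply, smul_eq_mul, abs_mul, chi_apply]
      by_cases h : n ∈ A
      · simp only [Set.indicator_of_mem h, abs_one, mul_one]
        rw [abs_of_nonneg (norm_nonneg x)]
        exact x.norm_coe_le_norm n
      · simp [Set.indicator_of_notMem h]
    refine ⟨z, hzY, ?_⟩
    rw [dist_eq_norm]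
    have hle : ‖x - z‖ ≤ ε/2 := by
      rw [BoundedContinuousFunction.norm_le (by linarith)]
      intro n
      simp only [BoundedContinuousFunction.coe_sub, Pi.sub_apply, hz,
        BoundedContinuousFunction.coe_mul, Pi.mul_apply, chi_apply]
      by_cases h : n ∈ A
      · simp [Set.indicator_of_mem h, le_of_lt (half_pos hε)]
      · simp only [Set.indicator_of_notMem h, mul_zero, sub_zero]
        have : ¬ (ε/2 ≤ |x n|) := h
        rw [Real.norm_eq_abs]
        linarith
    linarith
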